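/- Sequential recursion identity: let P be a row-stochastic matrix on finite X and define, for a fixed trajectory of erasures, the conditional laws p_i(x_i | x_0) satisfying the recursion p_{i+1}(x_{i+1}|x_0) = (1/(1−s_i)) ∑_{x_i} P(x_i, x_{i+1}) (p_i(x_i|x_0) − min_u p_i(x_i|u)), where s_i = ∑_{x_i} min_u p_i(x_i|u), with p_1(x_1|x_0) = P(x_0,x_1). Then for all i ≥ 1, p_i(x_i|x_0) = (∏_{k=1}^{i−1} 1/(1−s_k)) · (P^i(x_0,x_i) − ∑_{x_{i−1}} P(x_{i−1},x_i) min_u P^{i−1}(u,x_{i−1})), provided s_k < 1 for all k < i. -/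

import Mathlib

lemma inf'_affine {X : Type*} [Fintype X] (H : (Finset.univ : Finset X).Nonempty)
    (c d : ℝ) (hc : 0 ≤ c) (g : X → ℝ) :
    Finset.univ.inf' H (fun u => c * g u + d) = c * Finset.univ.inf' H g + d := by
  apply le_antisymm
  · obtain ⟨u, hu, he⟩ := Finset.exists_mem_eq_inf' H g
    rw [he]
    exact Finset.inf'_le (fun u => c * g u + d) hu
  · apply Finset.le_inf'
    intro b hb
    have := Finset.inf'_le g hb
    nlinarith

/-- closed form for the SMR sequential recursion:
`p_i(x_i|x_0) = (∏_{k=1}^{i−1} 1/(1−s_k)) (P^i(x_0,x_i) − ∑_{x'} P(x',x_i) min_u P^{i−1}(u,x'))`. -/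
theorem stmt_14 {X : Type*} [Fintype X] [DecidableEq X] [Nonempty X]
    (hcard : 2 ≤ Fintype.card X)
    (P : X → X → ℝ) (Pt : ℕ → X → X → ℝ)
    (hnonneg : ∀ x y, 0 ≤ P x y)
    (hrow : ∀ x, ∑ y, P x y = 1)
    (hPt0 : ∀ x y, Pt 0 x y = if x = y then 1 else 0)
    (hPtsucc : ∀ t x y, Pt (t + 1) x y = ∑ z, Pt t x z * P z y)
    (pf : ℕ → X → X → ℝ) (s : ℕ → ℝ)
    (hs : ∀ i, s i = ∑ x, Finset.univ.inf' Finset.univ_nonempty (fun u => pf i u x))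
    (hinit : ∀ x0 x1, pf 1 x0 x1 = P x0 x1)
    (hrec : ∀ i : ℕ, 1 ≤ i → ∀ (x0 x' : X),
      pf (i + 1) x0 x'
        = (1 - s i)⁻¹ *
          ∑ x, P x x' * (pf i x0 x - Finset.univ.inf' Finset.univ_nonempty (fun u => pf i u x))) :
    ∀ i : ℕ, 1 ≤ i → (∀ k, 1 ≤ k → k < i → s k < 1) → ∀ (x0 xi : X),
      pf i x0 xi
        = (∏ k ∈ Finset.Icc 1 (i - 1), (1 - s k)⁻¹) *
          (Pt i x0 xi
            - ∑ x', P x' xi * Finset.univ.inf' Finset.univ_nonempty (fun u => Pt (i - 1) u x')) := by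
  have hinf0 : ∀ x' : X,
      Finset.univ.inf' Finset.univ_nonempty (fun u => Pt 0 u x') = 0 := by
    intro x'
    obtain ⟨u, hu⟩ := Fintype.exists_ne_of_one_lt_card (by omega) x'
    apply le_antisymm
    · have h := Finset.inf'_le (fun u => Pt 0 u x') (Finset.mem_univ u)
      exact h.trans (by simp [hPt0, hu])
    · apply Finset.le_inf'
      intro b _
      rw [hPt0]
      split <;> norm_num
  refine Nat.le_induction ?_ ?_
  · intro _ x0 xi
    rw [Finset.Icc_eq_empty (by norm_num)]
    simp only [Finset.prod_empty, one_mul, hinf0]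
    rw [hinit, hPtsucc]
    simp [hPt0, Finset.sum_ite_eq]
  · intro i hi IH hsk x0 xi
    have hsk' : ∀ k, 1 ≤ k → k < i → s k < 1 := fun k h1 h2 => hsk k h1 (by omega)
    have IH' := IH hsk'
    set C : ℝ := ∏ k ∈ Finset.Icc 1 (i - 1), (1 - s k)⁻¹ with hC
    have hCpos : 0 ≤ C := by
      apply Finset.prod_nonneg
      intro k hk
      simp only [Finset.mem_Icc] at hk
      have := hsk k hk.1 (by omega)
      exact inv_nonneg.mpr (by linarith)
    set m : X → ℝ :=
      fun x => ∑ x', P x' x * Finset.univ.inf' Finset.univ_nonempty (fun u => Pt (i - 1) u x')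
      with hm
    have hinfpf : ∀ x : X,
        Finset.univ.inf' Finset.univ_nonempty (fun u => pf i u x)
          = C * Finset.univ.inf' Finset.univ_nonempty (fun u => Pt i u x) - C * m x := by
      intro x
      have : (fun u => pf i u x) = fun u => C * Pt i u x + (-(C * m x)) := by
        funext u
        rw [IH' u x]; ring
      rw [this, inf'_affine _ _ _ hCpos]
      ring
    rw [hrec i hi x0 xi]
    have hterm : ∀ x : X,
        P x xi * (pf i x0 x - Finset.univ.inf' Finset.univ_nonempty (fun u => pf i u x))
          = C * (P x xi * Pt i x0 x)
            - C * (P x xi * Finset.univ.inf' Finset.univ_nonempty (fun u => Pt i u x)) := by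
      intro x
      rw [IH' x0 x, hinfpf x]
      ring
    rw [Finset.sum_congr rfl (fun x _ => hterm x), Finset.sum_sub_distrib,
      ← Finset.mul_sum, ← Finset.mul_sum]
    have hPti : ∑ x, P x xi * Pt i x0 x = Pt (i + 1) x0 xi := by
      rw [hPtsucc]
      exact Finset.sum_congr rfl fun x _ => by ring
    have h2 : i - 1 + 1 = i := by omega
    have hprod : ∏ k ∈ Finset.Icc 1 (i + 1 - 1), (1 - s k)⁻¹ = C * (1 - s i)⁻¹ := by
      rw [show i + 1 - 1 = i - 1 + 1 by omega, Finset.prod_Icc_succ_top (by omega), h2, hC]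
    rw [hPti, hprod, show i + 1 - 1 = i from rfl]
    ring
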